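/- The collection of U-measurable subsets of κ^ω is closed under Suslin's operation A. -/

import Mathlib

universe u

namespace UMeas

variable {A : Type u}

/-- The first `n` values of an infinite sequence, as a list. -/
def seg (s : ℕ → A) (n : ℕ) : List A := List.ofFn (fun i : Fin n => s i)

/-- `T` is a `U`-branching tree: a set of finite sequences closed under initial
segments, containing the empty sequence, whose branching sets are in `U`. -/
def IsUTree (U : Ultrafilter A) (T : Set (List A)) : Prop :=
  ([] ∈ T) ∧ (∀ σ ∈ T, ∀ τ : List A, τ <+: σ → τ ∈ T) ∧
    ∀ σ ∈ T, {a : A | σ ++ [a] ∈ T} ∈ U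

/-- The set of infinite branches through `T`. -/
def branches (T : Set (List A)) : Set (ℕ → A) := {s | ∀ n, seg s n ∈ T}

/-- Concatenation `σ⌢s` of a finite sequence with an infinite sequence. -/
def app (σ : List A) (s : ℕ → A) : ℕ → A :=
  fun n => if h : n < σ.length then σ.get ⟨n, h⟩ else s (n - σ.length)

/-- The section `X↾σ = {s | σ⌢s ∈ X}`. -/
def sect (X : Set (ℕ → A)) (σ : List A) : Set (ℕ → A) := {s | app σ s ∈ X}

def ULarge (U : Ultrafilter A) (X : Set (ℕ → A)) : Prop :=
  ∃ T, IsUTree U T ∧ branches T ⊆ X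

def USmall (U : Ultrafilter A) (X : Set (ℕ → A)) : Prop :=
  ∃ T, IsUTree U T ∧ branches T ∩ X = ∅

def UDetermined (U : Ultrafilter A) (X : Set (ℕ → A)) : Prop :=
  ULarge U X ∨ USmall U X

def UNull (U : Ultrafilter A) (X : Set (ℕ → A)) : Prop :=
  ∀ σ : List A, USmall U (sect X σ)

def UMeasurable (U : Ultrafilter A) (X : Set (ℕ → A)) : Prop :=
  ∀ σ : List A, UDetermined U (sect X σ)

end UMeas

namespace UMeas

open Set

variable {A : Type u} {U : Ultrafilter A}

/-- shift of a sequence -/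
def shift (n : ℕ) (s : ℕ → A) : ℕ → A := fun m => s (n + m)

@[simp] lemma length_seg (s : ℕ → A) (n : ℕ) : (seg s n).length = n := by
  simp [seg]

@[simp] lemma getElem_seg (s : ℕ → A) {n i : ℕ} (h : i < (seg s n).length) :
    (seg s n)[i] = s i := by
  simp [seg]

@[simp] lemma seg_zero (s : ℕ → A) : seg s 0 = [] := by simp [seg]

lemma seg_add (s : ℕ → A) (a b : ℕ) :
    seg s (a + b) = seg s a ++ seg (shift a s) b := by
  apply List.ext_getElem
  · simp
  · intro i h1 h2
    rcases lt_or_ge i a with h | h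
    · rw [List.getElem_append_left (by simpa using h)]
      simp
    · rw [List.getElem_append_right (by simpa using h)]
      simp [shift]
      congr 1
      omega

lemma seg_succ (s : ℕ → A) (n : ℕ) : seg s (n + 1) = seg s n ++ [s n] := by
  rw [seg_add]
  rfl

lemma seg_take (s : ℕ → A) {a n : ℕ} (h : a ≤ n) :
    (seg s n).take a = seg s a := by
  obtain ⟨b, rfl⟩ := Nat.exists_eq_add_of_le h
  rw [seg_add, List.take_append_of_le_length (by simp), List.take_of_length_le (by simp)]

lemma seg_drop (s : ℕ → A) (a b : ℕ) :
    (seg s (a + b)).drop a = seg (shift a s) b := by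
  rw [seg_add, List.drop_append_of_le_length (by simp), List.drop_of_length_le (by simp)]
  simp

@[simp] lemma app_nil (s : ℕ → A) : app ([] : List A) s = s := by
  funext n; simp [app]

lemma app_apply_lt (σ : List A) (s : ℕ → A) {n : ℕ} (h : n < σ.length) :
    app σ s n = σ[n] := by simp [app, h]

lemma app_apply_ge (σ : List A) (s : ℕ → A) {n : ℕ} (h : σ.length ≤ n) :
    app σ s n = s (n - σ.length) := by
  simp [app]
  intro h'; omega

lemma seg_app_of_le (σ : List A) (s : ℕ → A) {n : ℕ} (h : n ≤ σ.length) :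
    seg (app σ s) n = σ.take n := by
  apply List.ext_getElem
  · simp; omega
  · intro i h1 h2
    have hi : i < σ.length := by simp at h1; omega
    simp [app_apply_lt σ s hi, hi]

lemma seg_app_add (σ : List A) (s : ℕ → A) (m : ℕ) :
    seg (app σ s) (σ.length + m) = σ ++ seg s m := by
  rw [seg_add, seg_app_of_le σ s (le_refl _), List.take_length]
  congr 1
  apply List.ext_getElem
  · simp
  · intro i h1 h2
    simp [shift, app_apply_ge σ s (by omega : σ.length ≤ σ.length + i)]

@[simp] lemma shift_app (σ : List A) (s : ℕ → A) : shift σ.length (app σ s) = s := by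
  funext m
  simp [shift, app_apply_ge σ s (by omega : σ.length ≤ σ.length + m)]

lemma app_shift {σ : List A} {t : ℕ → A} (h : seg t σ.length = σ) :
    app σ (shift σ.length t) = t := by
  funext n
  rcases lt_or_ge n σ.length with hn | hn
  · rw [app_apply_lt σ _ hn]
    rw [List.getElem_of_eq h.symm, getElem_seg]
  · rw [app_apply_ge σ _ hn]
    simp [shift]
    congr 1
    omega

lemma app_seg (s : ℕ → A) (n : ℕ) : app (seg s n) (shift n s) = s := by
  have := app_shift (σ := seg s n) (t := s) (by rw [length_seg])
  rwa [length_seg] at this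

lemma app_app (σ τ : List A) (s : ℕ → A) : app σ (app τ s) = app (σ ++ τ) s := by
  funext n
  rcases lt_or_ge n σ.length with hn | hn
  · rw [app_apply_lt σ _ hn, app_apply_lt _ _ (by simp; omega)]
    rw [List.getElem_append_left hn]
  · rw [app_apply_ge σ _ hn]
    rcases lt_or_ge (n - σ.length) τ.length with hm | hm
    · rw [app_apply_lt τ _ hm, app_apply_lt _ _ (by simp; omega)]
      rw [List.getElem_append_right (by omega)]
    · rw [app_apply_ge τ _ hm, app_apply_ge _ _ (by simp; omega)]
      simp
      congr 1
      omega

@[simp] lemma sect_nil (X : Set (ℕ → A)) : sect X [] = X := by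
  ext s; simp [sect]

lemma sect_sect (X : Set (ℕ → A)) (σ τ : List A) :
    sect (sect X σ) τ = sect X (σ ++ τ) := by
  ext s; simp [sect, app_app]

end UMeas

namespace UMeas

open Set

variable {A : Type u} {U : Ultrafilter A}

lemma nonempty_of_ultra (U : Ultrafilter A) : Nonempty A := by
  obtain ⟨a, -⟩ := Filter.nonempty_of_mem (Filter.univ_mem (f := (U : Filter A)))
  exact ⟨a⟩

lemma IsUTree.inter {T₁ T₂ : Set (List A)} (h₁ : IsUTree U T₁) (h₂ : IsUTree U T₂) :
    IsUTree U (T₁ ∩ T₂) := by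
  refine ⟨⟨h₁.1, h₂.1⟩, ?_, ?_⟩
  · rintro σ ⟨m1, m2⟩ τ hτ
    exact ⟨h₁.2.1 σ m1 τ hτ, h₂.2.1 σ m2 τ hτ⟩
  · rintro σ ⟨m1, m2⟩
    exact Filter.inter_mem (h₁.2.2 σ m1) (h₂.2.2 σ m2)

lemma branches_inter (T₁ T₂ : Set (List A)) :
    branches (T₁ ∩ T₂) = branches T₁ ∩ branches T₂ := by
  ext s
  exact ⟨fun h => ⟨fun n => (h n).1, fun n => (h n).2⟩, fun h n => ⟨h.1 n, h.2 n⟩⟩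

/-- localization of a tree at a node -/
def loc (T : Set (List A)) (η : List A) : Set (List A) := {τ | η ++ τ ∈ T}

lemma IsUTree.loc_tree {T : Set (List A)} (hT : IsUTree U T) {η : List A} (hη : η ∈ T) :
    IsUTree U (loc T η) := by
  refine ⟨by simpa [loc], ?_, ?_⟩
  · intro σ hσ τ hτ
    exact hT.2.1 (η ++ σ) hσ (η ++ τ) (by exact ⟨hτ.choose, by rw [List.append_assoc, hτ.choose_spec]⟩)
  · intro σ hσ
    have := hT.2.2 (η ++ σ) hσ
    simpa [loc, List.append_assoc] using this

lemma branches_loc {T : Set (List A)} (hT : IsUTree U T) {η : List A} (hη : η ∈ T) :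
    branches (loc T η) = sect (branches T) η := by
  ext s
  constructor
  · intro h n
    rcases le_or_gt n η.length with hn | hn
    · rw [seg_app_of_le _ _ hn]
      exact hT.2.1 η hη _ (List.take_prefix _ _)
    · obtain ⟨m, rfl⟩ := Nat.exists_eq_add_of_le hn.le
      rw [seg_app_add]
      exact h m
  · intro h m
    have := h (η.length + m)
    rwa [seg_app_add] at this

/-- build an infinite sequence through a step-extendable predicate -/
lemma exists_seq_of_step [Nonempty A] {C : List A → Prop} (h0 : C [])
    (step : ∀ τ, C τ → ∃ b, C (τ ++ [b])) : ∃ s : ℕ → A, ∀ n, C (seg s n) := by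
  let F : (n : ℕ) → {τ : List A // C τ ∧ τ.length = n} := fun n =>
    Nat.rec ⟨[], h0, rfl⟩
      (fun _ p => ⟨p.1 ++ [(step p.1 p.2.1).choose], (step p.1 p.2.1).choose_spec,
        by simp [p.2.2]⟩) n
  refine ⟨fun n => (F (n + 1)).1.getD n (Classical.arbitrary A), ?_⟩
  have key : ∀ n, seg (fun n => (F (n + 1)).1.getD n (Classical.arbitrary A)) n = (F n).1 := by
    intro n
    induction n with
    | zero => rfl
    | succ n ih =>
      rw [seg_succ, ih]
      have hF : (F (n + 1)).1 = (F n).1 ++ [(step (F n).1 (F n).2.1).choose] := rfl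
      rw [hF]
      congr 1
      have hlen : (F n).1.length = n := (F n).2.2
      rw [List.getD_eq_getElem?_getD, List.getElem?_append_right (by omega)]
      simp [hlen]
  intro n
  rw [key n]
  exact (F n).2.1

lemma exists_branch {T : Set (List A)} (hT : IsUTree U T) : ∃ s, s ∈ branches T := by
  haveI := nonempty_of_ultra U
  exact exists_seq_of_step hT.1 (fun τ hτ => by
    obtain ⟨a, ha⟩ := Filter.nonempty_of_mem (hT.2.2 τ hτ)
    exact ⟨a, ha⟩)

lemma USmall.mono {X Y : Set (ℕ → A)} (h : USmall U X) (hXY : Y ⊆ X) : USmall U Y := by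
  obtain ⟨T, hT, hd⟩ := h
  refine ⟨T, hT, ?_⟩
  rw [Set.eq_empty_iff_forall_notMem] at hd ⊢
  exact fun s hs => hd s ⟨hs.1, hXY hs.2⟩

lemma USmall.union {X Y : Set (ℕ → A)} (hX : USmall U X) (hY : USmall U Y) :
    USmall U (X ∪ Y) := by
  obtain ⟨T₁, hT₁, hd₁⟩ := hX
  obtain ⟨T₂, hT₂, hd₂⟩ := hY
  refine ⟨T₁ ∩ T₂, hT₁.inter hT₂, ?_⟩
  rw [branches_inter]
  rw [Set.eq_empty_iff_forall_notMem] at hd₁ hd₂ ⊢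
  rintro s ⟨⟨hs1, hs2⟩, hs3 | hs3⟩
  · exact hd₁ s ⟨hs1, hs3⟩
  · exact hd₂ s ⟨hs2, hs3⟩

lemma UNull.mono {X Y : Set (ℕ → A)} (h : UNull U X) (hXY : Y ⊆ X) : UNull U Y :=
  fun σ => (h σ).mono (fun s hs => hXY hs)

lemma UNull.union {X Y : Set (ℕ → A)} (hX : UNull U X) (hY : UNull U Y) :
    UNull U (X ∪ Y) := by
  intro σ
  have : sect (X ∪ Y) σ = sect X σ ∪ sect Y σ := rfl
  rw [this]
  exact (hX σ).union (hY σ)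

lemma UNull.sectNull {X : Set (ℕ → A)} (h : UNull U X) (ρ : List A) : UNull U (sect X ρ) := by
  intro σ
  rw [sect_sect]
  exact h (ρ ++ σ)

lemma USmall.of_null {X : Set (ℕ → A)} (h : UNull U X) : USmall U X := by
  have := h []
  rwa [sect_nil] at this

/-- Fusion: a countable union of U-null sets is U-small. -/
lemma small_iUnion_of_null (Xs : ℕ → Set (ℕ → A)) (h : ∀ n, UNull U (Xs n)) :
    USmall U (⋃ n, Xs n) := by
  choose S hS hSd using fun n η => h n η
  set T : Set (List A) := {τ | ∀ n ≤ τ.length, τ.drop n ∈ S n (τ.take n)} with hTdef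
  have hroot : [] ∈ T := by
    intro n hn
    have hn0 : n = 0 := by simpa using hn
    subst hn0
    simpa using (hS 0 []).1
  have hprefix : ∀ σ ∈ T, ∀ τ : List A, τ <+: σ → τ ∈ T := by
    rintro σ hσ τ ⟨r, rfl⟩ n hn
    have h1 : (τ ++ r).take n = τ.take n := List.take_append_of_le_length hn
    have h2 : (τ ++ r).drop n = τ.drop n ++ r := List.drop_append_of_le_length hn
    have := hσ n (by simp; omega)
    rw [h1, h2] at this
    exact (hS n (τ.take n)).2.1 _ this _ ⟨r, rfl⟩
  have htree : IsUTree U T := by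
    refine ⟨hroot, hprefix, ?_⟩
    intro τ hτ
    have hmem : (⋂ n ∈ Finset.range (τ.length + 1),
        {a : A | τ.drop n ++ [a] ∈ S n (τ.take n)}) ∈ (U : Filter A) := by
      rw [Filter.biInter_finset_mem]
      intro n hn
      simp only [Finset.mem_range] at hn
      exact (hS n (τ.take n)).2.2 (τ.drop n) (hτ n (by omega))
    rw [Ultrafilter.mem_coe] at hmem
    refine Filter.mem_of_superset hmem ?_
    intro a ha
    simp only [Set.mem_iInter, Finset.mem_range, Set.mem_setOf_eq] at ha
    intro n hn
    have hlen : (τ ++ [a]).length = τ.length + 1 := by simp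
    rcases Nat.lt_or_ge n (τ.length + 1) with hn' | hn'
    · have h1 : (τ ++ [a]).take n = τ.take n := List.take_append_of_le_length (by omega)
      have h2 : (τ ++ [a]).drop n = τ.drop n ++ [a] := List.drop_append_of_le_length (by omega)
      rw [h1, h2]
      exact ha n hn'
    · have : n = τ.length + 1 := by rw [hlen] at hn; omega
      subst this
      rw [List.drop_of_length_le (by simp), List.take_of_length_le (by simp)]
      exact (hS _ _).1
  refine ⟨T, htree, ?_⟩
  rw [Set.eq_empty_iff_forall_notMem]
  rintro s ⟨hsb, hsX⟩
  simp only [Set.mem_iUnion] at hsX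
  obtain ⟨n, hn⟩ := hsX
  have hbr : shift n s ∈ branches (S n (seg s n)) := by
    intro m
    have := hsb (n + m) n (by simp)
    rwa [seg_drop, seg_take s (by omega : n ≤ n + m)] at this
  have hd := hSd n (seg s n)
  rw [Set.eq_empty_iff_forall_notMem] at hd
  exact hd (shift n s) ⟨hbr, show app (seg s n) (shift n s) ∈ Xs n by rw [app_seg]; exact hn⟩

lemma UNull.iUnion {Xs : ℕ → Set (ℕ → A)} (h : ∀ n, UNull U (Xs n)) :
    UNull U (⋃ n, Xs n) := by
  intro σ
  have : sect (⋃ n, Xs n) σ = ⋃ n, sect (Xs n) σ := by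
    ext s; simp [sect]
  rw [this]
  exact small_iUnion_of_null _ (fun n => (h n).sectNull σ)

end UMeas

namespace UMeas

open Set

variable {A : Type u} {U : Ultrafilter A}

lemma seg_one (s : ℕ → A) : seg s 1 = [s 0] := by
  rw [show (1 : ℕ) = 0 + 1 from rfl, seg_succ, seg_zero, List.nil_append]

lemma shift_shift (a b : ℕ) (s : ℕ → A) : shift a (shift b s) = shift (b + a) s := by
  funext m; simp [shift]; congr 1; omega

lemma seg_cons (s : ℕ → A) (m : ℕ) : seg s (m + 1) = s 0 :: seg (shift 1 s) m := by
  rw [show m + 1 = 1 + m by omega, seg_add, seg_one, List.singleton_append]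

lemma prefix_concat_cases {τ' τ : List A} {a : A} (h : τ' <+: τ ++ [a]) :
    τ' <+: τ ∨ τ' = τ ++ [a] := by
  rcases le_or_gt τ'.length τ.length with hl | hl
  · left
    obtain ⟨r, hr⟩ := h
    have : τ' = (τ ++ [a]).take τ'.length := by rw [← hr, List.take_left]
    rw [List.take_append_of_le_length hl] at this
    rw [this]
    exact List.take_prefix _ _
  · right
    have h2 := h.length_le
    simp at h2
    have : τ'.length = (τ ++ [a]).length := by simp; omega
    exact List.IsPrefix.eq_of_length h this

/-- Basic open set with stem `σ` and tree `T`. -/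
def Oset (σ : List A) (T : Set (List A)) : Set (ℕ → A) :=
  {t | seg t σ.length = σ ∧ shift σ.length t ∈ branches T}

/-- `W` is open: every point has a basic open neighborhood inside `W`. -/
def IsOpn (U : Ultrafilter A) (W : Set (ℕ → A)) : Prop :=
  ∀ t ∈ W, ∃ σ T, IsUTree U T ∧ t ∈ Oset σ T ∧ Oset σ T ⊆ W

lemma mem_Oset_app {T : Set (List A)} {s : ℕ → A} (σ : List A) (hs : s ∈ branches T) :
    app σ s ∈ Oset σ T := by
  constructor
  · rw [seg_app_of_le σ s (le_refl _), List.take_length]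
  · rw [shift_app]
    exact hs

lemma Oset_nonempty {T : Set (List A)} (hT : IsUTree U T) (σ : List A) :
    (Oset σ T).Nonempty := by
  obtain ⟨s, hs⟩ := exists_branch hT
  exact ⟨app σ s, mem_Oset_app σ hs⟩

/-- Key dichotomy: the section of an open set at any stem is either large or small. -/
lemma opn_dichotomy {W : Set (ℕ → A)} (hW : IsOpn U W) (ρ : List A) :
    (∃ T, IsUTree U T ∧ branches T ⊆ sect W ρ) ∨ USmall U (sect W ρ) := by
  classical
  set G : List A → Prop := fun τ => ∃ T, IsUTree U T ∧ Oset (ρ ++ τ) T ⊆ W with hGdef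
  by_cases hG : G []
  · left
    obtain ⟨T, hT, hsub⟩ := hG
    rw [List.append_nil] at hsub
    exact ⟨T, hT, fun s hs => hsub (mem_Oset_app ρ hs)⟩
  · right
    set T0 : Set (List A) := {τ | ∀ τ', τ' <+: τ → ¬ G τ'} with hT0def
    have hroot : [] ∈ T0 := by
      intro τ' hτ'
      rw [List.prefix_nil] at hτ'
      subst hτ'
      exact hG
    have hpre : ∀ σ ∈ T0, ∀ τ : List A, τ <+: σ → τ ∈ T0 :=
      fun σ hσ τ hτ τ' hτ' => hσ τ' (hτ'.trans hτ)
    have hbranch : ∀ τ ∈ T0, {a : A | τ ++ [a] ∈ T0} ∈ U := by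
      intro τ hτ
      have hsup : {a : A | ¬ G (τ ++ [a])} ⊆ {a : A | τ ++ [a] ∈ T0} := by
        intro a ha τ' hτ'
        rcases prefix_concat_cases hτ' with hc | hc
        · exact hτ τ' hc
        · subst hc; exact ha
      rcases Ultrafilter.mem_or_compl_mem U {a : A | G (τ ++ [a])} with hN' | hN'
      swap
      · refine Filter.mem_of_superset hN' (fun a ha => hsup ?_)
        simpa using ha
      exfalso
      -- amalgamate the witnessing trees
      set Ta : A → Set (List A) := fun a =>
        if h : G (τ ++ [a]) then h.choose else Set.univ with hTadef
      have hTa : ∀ a, G (τ ++ [a]) →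
          IsUTree U (Ta a) ∧ Oset (ρ ++ (τ ++ [a])) (Ta a) ⊆ W := by
        intro a ha
        simp only [hTadef, dif_pos ha]
        exact ha.choose_spec
      set Tstar : Set (List A) := {η | η = [] ∨ ∃ a r, η = a :: r ∧ G (τ ++ [a]) ∧ r ∈ Ta a}
        with hTsdef
      have hTstar : IsUTree U Tstar := by
        refine ⟨Or.inl rfl, ?_, ?_⟩
        · rintro σ (rfl | ⟨a, r, rfl, ha, hr⟩) τ' hτ'
          · rw [List.prefix_nil] at hτ'; exact Or.inl hτ'
          · rcases τ' with _ | ⟨b, r'⟩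
            · exact Or.inl rfl
            · rw [List.cons_prefix_cons] at hτ'
              obtain ⟨rfl, hpre'⟩ := hτ'
              exact Or.inr ⟨_, r', rfl, ha, ((hTa _ ha).1).2.1 r hr r' hpre'⟩
        · rintro σ (rfl | ⟨a, r, rfl, ha, hr⟩)
          · refine Filter.mem_of_superset hN' ?_
            intro a ha
            exact Or.inr ⟨a, [], by simp, ha, ((hTa a ha).1).1⟩
          · have := ((hTa a ha).1).2.2 r hr
            refine Filter.mem_of_superset this ?_
            intro b hb
            exact Or.inr ⟨a, r ++ [b], by simp, ha, hb⟩
      -- the amalgamated tree witnesses G τ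
      have hGτ : G τ := by
        refine ⟨Tstar, hTstar, ?_⟩
        intro t ht
        set L := (ρ ++ τ).length with hLdef
        have h1 : seg t L = ρ ++ τ := ht.1
        have h2 : ∀ n, seg (shift L t) n ∈ Tstar := ht.2
        set a : A := shift L t 0 with hadef
        have ha1 := h2 1
        rw [seg_one] at ha1
        rcases ha1 with h | ⟨a', r, heq, ha', hr⟩
        · exact absurd h (by simp)
        · have haa : a' = a ∧ r = [] := by
            rw [List.cons.injEq] at heq
            exact ⟨heq.1.symm, heq.2.symm⟩
          obtain ⟨rfl, rfl⟩ := haa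
          -- t belongs to the basic open set at stem (ρ ++ τ) ++ [a]
          have htmem : t ∈ Oset (ρ ++ (τ ++ [a])) (Ta a) := by
            constructor
            · have hlen : (ρ ++ (τ ++ [a])).length = L + 1 := by simp [hLdef]; omega
              rw [hlen, seg_succ, h1]
              have : t L = a := rfl
              rw [this, List.append_assoc]
            · have hlen : (ρ ++ (τ ++ [a])).length = L + 1 := by simp [hLdef]; omega
              rw [hlen]
              intro m
              have h3 := h2 (m + 1)
              rw [seg_cons] at h3
              rcases h3 with h | ⟨a', r', heq, ha'', hr'⟩
              · exact absurd h (by simp)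
              · rw [List.cons.injEq] at heq
                obtain ⟨heq1, heq2⟩ := heq
                rw [shift_shift] at heq2
                rw [← heq1] at ha'' hr'
                rw [← heq2] at hr'
                exact hr'
          exact (hTa a ha').2 htmem
      exact hτ τ (List.prefix_refl τ) hGτ
    refine ⟨T0, ⟨hroot, hpre, hbranch⟩, ?_⟩
    rw [Set.eq_empty_iff_forall_notMem]
    rintro s ⟨hsb, hsW⟩
    obtain ⟨σ, T, hT, htO, hsub⟩ := hW (app ρ s) hsW
    set k := σ.length with hkdef
    have hseg : seg (app ρ s) k = σ := htO.1
    have htl : ∀ n, seg (shift k (app ρ s)) n ∈ T := htO.2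
    set j := k - ρ.length with hjdef
    set L := ρ.length + j with hLdef
    have hkL : k ≤ L := by omega
    set τ := seg s j with hτdef
    have hρτ : ρ ++ τ = seg (app ρ s) L := (seg_app_add ρ s j).symm
    have hLρτ : (ρ ++ τ).length = L := by simp [hτdef, hLdef]
    set η := (seg (app ρ s) L).drop k with hηdef
    have hη : η ∈ T := by
      have h5 := htl (L - k)
      rw [hηdef, show L = k + (L - k) by omega, seg_drop]
      exact h5
    have hT' : IsUTree U (loc T η) := hT.loc_tree hη
    have hGτ : G τ := by
      refine ⟨loc T η, hT', ?_⟩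
      intro t' ht'
      have h1' : seg t' L = ρ ++ τ := by rw [← hLρτ]; exact ht'.1
      have h2' : ∀ n, seg (shift L t') n ∈ loc T η := by
        intro n
        have := ht'.2 n
        rwa [hLρτ] at this
      apply hsub
      constructor
      · rw [← hkdef, show seg t' k = (seg t' L).take k from (by rw [seg_take t' hkL]),
          h1', hρτ, seg_take _ hkL, hseg]
      · rw [← hkdef]
        intro m
        rcases le_or_gt m (L - k) with hm | hm
        · have e1 : seg (shift k t') m = (seg t' (k + m)).drop k := (seg_drop t' k m).symm
          have e2 : seg t' (k + m) = (seg t' L).take (k + m) := (seg_take t' (by omega)).symm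
          have e3 : (seg t' L) = seg (app ρ s) L := by rw [h1', hρτ]
          rw [e1, e2, e3, seg_take _ (by omega : k + m ≤ L), seg_drop]
          exact htl m
        · set i := k + m - L with hidef
          have hkm : k + m = L + i := by omega
          have e1 : seg (shift k t') m = (seg t' (k + m)).drop k := (seg_drop t' k m).symm
          rw [e1, hkm, seg_add, List.drop_append_of_le_length (by simp; omega), h1', hρτ]
          have := h2' i
          exact hT.2.1 _ (this) _ ⟨[], by simp [hηdef]⟩
    exact hsb j τ (List.prefix_refl τ) hGτ

end UMeas

namespace UMeas

open Set
open scoped symmDiff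

variable {A : Type u} {U : Ultrafilter A}

lemma small_iff_large_compl {X : Set (ℕ → A)} : USmall U X ↔ ULarge U Xᶜ := by
  unfold USmall ULarge
  refine exists_congr fun T => and_congr_right fun _ => ?_
  rw [Set.subset_compl_iff_disjoint_right, Set.disjoint_iff_inter_eq_empty]

lemma large_iff_small_compl {X : Set (ℕ → A)} : ULarge U X ↔ USmall U Xᶜ := by
  rw [small_iff_large_compl, compl_compl]

lemma UMeasurable.compl {X : Set (ℕ → A)} (hX : UMeasurable U X) : UMeasurable U Xᶜ := by
  intro σ
  have hs : sect Xᶜ σ = (sect X σ)ᶜ := rfl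
  rcases hX σ with h | h
  · right; rw [hs, ← large_iff_small_compl]; exact h
  · left; rw [hs, ← small_iff_large_compl]; exact h

lemma UMeasurable.inter {X Y : Set (ℕ → A)} (hX : UMeasurable U X) (hY : UMeasurable U Y) :
    UMeasurable U (X ∩ Y) := by
  intro σ
  have hs : sect (X ∩ Y) σ = sect X σ ∩ sect Y σ := rfl
  rcases hX σ with h1 | h1
  · rcases hY σ with h2 | h2
    · left
      obtain ⟨T1, hT1, hb1⟩ := h1
      obtain ⟨T2, hT2, hb2⟩ := h2
      refine ⟨T1 ∩ T2, hT1.inter hT2, ?_⟩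
      rw [branches_inter, hs]
      exact fun s hsm => ⟨hb1 hsm.1, hb2 hsm.2⟩
    · right; rw [hs]; exact h2.mono Set.inter_subset_right
  · right; rw [hs]; exact h1.mono Set.inter_subset_left

lemma Oset_subset_of_branches_sect {X : Set (ℕ → A)} {T : Set (List A)} {ρ : List A}
    (h : branches T ⊆ sect X ρ) : Oset ρ T ⊆ X := by
  intro t ht
  have h2 : app ρ (shift ρ.length t) ∈ X := h ht.2
  rwa [app_shift ht.1] at h2

/-- representation: open modulo null -/
def Msr (U : Ultrafilter A) (X : Set (ℕ → A)) : Prop :=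
  ∃ W N, IsOpn U W ∧ UNull U N ∧ X = W ∆ N

lemma UMeasurable.of_msr {X : Set (ℕ → A)} (h : Msr U X) : UMeasurable U X := by
  obtain ⟨W, N, hW, hN, rfl⟩ := h
  intro σ
  have hs : sect (W ∆ N) σ = sect W σ ∆ sect N σ := by
    ext s; simp [sect, Set.mem_symmDiff]
  obtain ⟨S, hS, hSd⟩ := hN σ
  rcases opn_dichotomy hW σ with ⟨T, hT, hsub⟩ | hsm
  · left
    refine ⟨T ∩ S, hT.inter hS, ?_⟩
    rw [branches_inter, hs]
    rintro s ⟨hs1, hs2⟩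
    have : s ∉ sect N σ := by
      rw [Set.eq_empty_iff_forall_notMem] at hSd
      exact fun hc => hSd s ⟨hs2, hc⟩
    exact Set.mem_symmDiff.mpr (Or.inl ⟨hsub hs1, this⟩)
  · right
    rw [hs]
    exact (hsm.union ⟨S, hS, hSd⟩).mono (Set.symmDiff_subset_union)

lemma UMeasurable.msr {X : Set (ℕ → A)} (hX : UMeasurable U X) : Msr U X := by
  classical
  set W : Set (ℕ → A) := {t | ∃ σ T, IsUTree U T ∧ t ∈ Oset σ T ∧ Oset σ T ⊆ X} with hWdef
  have hWopen : IsOpn U W := by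
    rintro t ⟨σ, T, hT, htm, hsub⟩
    exact ⟨σ, T, hT, htm, fun t' ht' => ⟨σ, T, hT, ht', hsub⟩⟩
  have hWX : W ⊆ X := by
    rintro t ⟨σ, T, hT, htm, hsub⟩
    exact hsub htm
  refine ⟨W, X \ W, hWopen, ?_, ?_⟩
  · intro ρ
    rcases hX ρ with ⟨T, hT, hsub⟩ | hsm
    · refine ⟨T, hT, ?_⟩
      rw [Set.eq_empty_iff_forall_notMem]
      rintro s ⟨hsb, hsn⟩
      have hOX : Oset ρ T ⊆ X := Oset_subset_of_branches_sect hsub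
      have hOW : Oset ρ T ⊆ W := fun t' ht' => ⟨ρ, T, hT, ht', hOX⟩
      have : app ρ s ∈ W := hOW (mem_Oset_app ρ hsb)
      exact hsn.2 this
    · exact hsm.mono (fun s hs => hs.1)
  · ext t
    simp only [Set.mem_symmDiff, Set.mem_diff]
    constructor
    · intro htX
      by_cases htW : t ∈ W
      · exact Or.inl ⟨htW, fun hc => hc.2 htW⟩
      · exact Or.inr ⟨⟨htX, htW⟩, htW⟩
    · rintro (⟨htW, -⟩ | ⟨⟨htX, -⟩, -⟩)
      · exact hWX htW
      · exact htX

lemma UMeasurable.iUnion {M : ℕ → Set (ℕ → A)} (hM : ∀ n, UMeasurable U (M n)) :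
    UMeasurable U (⋃ n, M n) := by
  have hrep := fun n => (hM n).msr
  choose W N hWo hNn hMe using hrep
  set Wu : Set (ℕ → A) := ⋃ n, W n with hWud
  have hWuo : IsOpn U Wu := by
    intro t ht
    rw [Set.mem_iUnion] at ht
    obtain ⟨n, hn⟩ := ht
    obtain ⟨σ, T, hT, htm, hsub⟩ := hWo n t hn
    exact ⟨σ, T, hT, htm, fun t' ht' => Set.mem_iUnion.mpr ⟨n, hsub ht'⟩⟩
  set Xu : Set (ℕ → A) := ⋃ n, M n
  have hdiff : Xu ∆ Wu ⊆ ⋃ n, N n := by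
    intro t ht
    rw [Set.mem_symmDiff] at ht
    rcases ht with ⟨htX, htW⟩ | ⟨htW, htX⟩
    · rw [Set.mem_iUnion] at htX
      obtain ⟨n, hn⟩ := htX
      rw [hMe n, Set.mem_symmDiff] at hn
      rcases hn with ⟨hw, -⟩ | ⟨hn', -⟩
      · exact absurd (Set.mem_iUnion.mpr ⟨n, hw⟩) htW
      · exact Set.mem_iUnion.mpr ⟨n, hn'⟩
    · rw [Set.mem_iUnion] at htW
      obtain ⟨n, hn⟩ := htW
      have : t ∉ M n := fun hc => htX (Set.mem_iUnion.mpr ⟨n, hc⟩)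
      rw [hMe n, Set.mem_symmDiff] at this
      push_neg at this
      exact Set.mem_iUnion.mpr ⟨n, this.1 hn⟩
  refine UMeasurable.of_msr ⟨Wu, Xu ∆ Wu, hWuo, (UNull.iUnion hNn).mono hdiff, ?_⟩
  rw [symmDiff_comm Xu Wu, symmDiff_symmDiff_cancel_left]

lemma UMeasurable.iInter {M : ℕ → Set (ℕ → A)} (hM : ∀ n, UMeasurable U (M n)) :
    UMeasurable U (⋂ n, M n) := by
  have : (⋂ n, M n) = (⋃ n, (M n)ᶜ)ᶜ := by rw [Set.compl_iUnion]; simp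
  rw [this]
  exact (UMeasurable.iUnion (fun n => (hM n).compl)).compl

/-- Every set has a measurable hull. -/
lemma exists_hull (X : Set (ℕ → A)) :
    ∃ H, X ⊆ H ∧ UMeasurable U H ∧
      ∀ Z, UMeasurable U Z → Z ⊆ H → Z ∩ X = ∅ → UNull U Z := by
  classical
  set W : Set (ℕ → A) := {t | ∃ σ T, IsUTree U T ∧ t ∈ Oset σ T ∧ Oset σ T ∩ X = ∅}
    with hWdef
  have hWopen : IsOpn U W := by
    rintro t ⟨σ, T, hT, htm, hdisj⟩
    exact ⟨σ, T, hT, htm, fun t' ht' => ⟨σ, T, hT, ht', hdisj⟩⟩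
  have hWX : W ∩ X = ∅ := by
    rw [Set.eq_empty_iff_forall_notMem]
    rintro t ⟨⟨σ, T, hT, htm, hdisj⟩, htX⟩
    rw [Set.eq_empty_iff_forall_notMem] at hdisj
    exact hdisj t ⟨htm, htX⟩
  have hWmeas : UMeasurable U W := by
    intro ρ
    rcases opn_dichotomy hWopen ρ with ⟨T, hT, hsub⟩ | hsm
    · exact Or.inl ⟨T, hT, hsub⟩
    · exact Or.inr hsm
  refine ⟨Wᶜ, ?_, hWmeas.compl, ?_⟩
  · intro t htX htW
    rw [Set.eq_empty_iff_forall_notMem] at hWX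
    exact hWX t ⟨htW, htX⟩
  · intro Z hZmeas hZH hZX
    intro ρ
    rcases hZmeas ρ with ⟨T, hT, hsub⟩ | hsm
    · exfalso
      have hOZ : Oset ρ T ⊆ Z := Oset_subset_of_branches_sect hsub
      have hOX : Oset ρ T ∩ X = ∅ := by
        rw [Set.eq_empty_iff_forall_notMem]
        rintro t ⟨ht1, ht2⟩
        rw [Set.eq_empty_iff_forall_notMem] at hZX
        exact hZX t ⟨hOZ ht1, ht2⟩
      have hOW : Oset ρ T ⊆ W := fun t' ht' => ⟨ρ, T, hT, ht', hOX⟩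
      obtain ⟨t, ht⟩ := Oset_nonempty hT ρ
      exact hZH (hOZ ht) (hOW ht)
    · exact hsm

end UMeas

namespace UMeas

variable {A : Type u} {U : Ultrafilter A}

lemma seg_take_min (f : ℕ → A) (m n : ℕ) : (seg f n).take m = seg f (min m n) := by
  rcases le_total m n with h | h
  · rw [seg_take f h, min_eq_left h]
  · rw [List.take_of_length_le (by simpa using h), min_eq_right h]

end UMeas

open UMeas in
open scoped symmDiff in
/-- The `U`-measurable sets are closed under Suslin's operation A. -/
theorem stmt8 {A : Type u} (U : Ultrafilter A) (P : List ℕ → Set (ℕ → A))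
    (hP : ∀ σ : List ℕ, UMeas.UMeasurable U (P σ)) :
    UMeas.UMeasurable U (⋃ f : ℕ → ℕ, ⋂ n : ℕ, P (UMeas.seg f n)) := by
  classical
  set X : Set (ℕ → A) := ⋃ f : ℕ → ℕ, ⋂ n : ℕ, P (UMeas.seg f n) with hXdef
  set Q : List ℕ → Set (ℕ → A) := fun τ => ⋂ n : ℕ, P (τ.take n) with hQdef
  have hQmeas : ∀ τ, UMeasurable U (Q τ) := fun τ =>
    UMeasurable.iInter (fun n => hP (τ.take n))
  set Xt : List ℕ → Set (ℕ → A) :=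
    fun τ => {s | ∃ f : ℕ → ℕ, seg f τ.length = τ ∧ ∀ n, s ∈ P (seg f n)} with hXtdef
  obtain ⟨H', hH'sub, hH'meas, hH'null⟩ :
      ∃ H' : List ℕ → Set (ℕ → A), (∀ τ, Xt τ ⊆ H' τ) ∧ (∀ τ, UMeasurable U (H' τ)) ∧
        ∀ τ, ∀ Z, UMeasurable U Z → Z ⊆ H' τ → Z ∩ Xt τ = ∅ → UNull U Z := by
    choose H' h1 h2 h3 using fun τ => exists_hull (U := U) (Xt τ)
    exact ⟨H', h1, h2, h3⟩
  set Ht : List ℕ → Set (ℕ → A) := fun τ => Q τ ∩ ⋂ n : ℕ, H' (τ.take n) with hHtdef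
  have hHmeas : ∀ τ, UMeasurable U (Ht τ) := fun τ =>
    (hQmeas τ).inter (UMeasurable.iInter (fun n => hH'meas (τ.take n)))
  have htakeseg : ∀ (f : ℕ → ℕ) (τ : List ℕ), seg f τ.length = τ →
      ∀ n, τ.take n = seg f (min n τ.length) := by
    intro f τ hf n
    rw [← hf, seg_take_min, hf]
  have hXtsub : ∀ τ (n : ℕ), Xt τ ⊆ Xt (τ.take n) := by
    rintro τ n s ⟨f, hf, hfP⟩
    refine ⟨f, ?_, hfP⟩
    rw [htakeseg f τ hf n]
    congr 1
    rw [← hf, length_seg]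
  have hXtQ : ∀ τ, Xt τ ⊆ Q τ := by
    rintro τ s ⟨f, hf, hfP⟩
    refine Set.mem_iInter.mpr fun n => ?_
    rw [htakeseg f τ hf n]
    exact hfP _
  have hXtH : ∀ τ, Xt τ ⊆ Ht τ := by
    intro τ
    refine Set.subset_inter (hXtQ τ) (Set.subset_iInter fun n => ?_)
    exact (hXtsub τ n).trans (hH'sub (τ.take n))
  have hHtH' : ∀ τ, Ht τ ⊆ H' τ := by
    intro τ s hs
    have := Set.mem_iInter.mp hs.2 τ.length
    rwa [List.take_length] at this
  have hHtQ : ∀ τ, Ht τ ⊆ Q τ := fun τ => Set.inter_subset_left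
  have hXtsucc : ∀ τ, Xt τ = ⋃ k : ℕ, Xt (τ ++ [k]) := by
    intro τ
    ext s
    simp only [Set.mem_iUnion]
    constructor
    · rintro ⟨f, hf, hfP⟩
      refine ⟨f τ.length, f, ?_, hfP⟩
      rw [List.length_append, List.length_singleton, seg_succ, hf]
    · rintro ⟨k, f, hf, hfP⟩
      rw [List.length_append, List.length_singleton, seg_succ] at hf
      refine ⟨f, ?_, hfP⟩
      have h1 := congrArg (List.take τ.length) hf
      rwa [List.take_append_of_le_length (by simp [length_seg]),
        List.take_of_length_le (by simp [length_seg]),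
        List.take_append_of_le_length (le_refl _), List.take_length] at h1
  set D : List ℕ → Set (ℕ → A) := fun τ => Ht τ \ ⋃ k : ℕ, Ht (τ ++ [k]) with hDdef
  have hDmeas : ∀ τ, UMeasurable U (D τ) := by
    intro τ
    rw [hDdef]
    simp only [Set.diff_eq]
    exact (hHmeas τ).inter (UMeasurable.iUnion (fun k => hHmeas (τ ++ [k]))).compl
  have hDnull : ∀ τ, UNull U (D τ) := by
    intro τ
    refine hH'null τ (D τ) (hDmeas τ) (fun s hs => hHtH' τ hs.1) ?_
    rw [Set.eq_empty_iff_forall_notMem]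
    rintro s ⟨⟨-, hs2⟩, hsX⟩
    have := (hXtsucc τ) ▸ hsX
    rw [Set.mem_iUnion] at this
    obtain ⟨k, hk⟩ := this
    exact hs2 (Set.mem_iUnion.mpr ⟨k, hXtH _ hk⟩)
  set N0 : Set (ℕ → A) := ⋃ τ : List ℕ, D τ with hN0def
  have hN0 : UNull U N0 := by
    have heq : N0 = ⋃ n : ℕ, D ((Denumerable.eqv (List ℕ)).symm n) := by
      ext t
      simp only [hN0def, Set.mem_iUnion]
      constructor
      · rintro ⟨τ, h⟩
        exact ⟨Denumerable.eqv (List ℕ) τ, by simpa⟩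
      · rintro ⟨n, h⟩
        exact ⟨_, h⟩
    rw [heq]
    exact UNull.iUnion (fun n => hDnull _)
  have hXXt : X = Xt [] := by
    ext s
    simp only [hXdef, Set.mem_iUnion, Set.mem_iInter, hXtdef, Set.mem_setOf_eq,
      List.length_nil, seg_zero]
    exact ⟨fun ⟨f, hf⟩ => ⟨f, trivial, hf⟩, fun ⟨f, _, hf⟩ => ⟨f, hf⟩⟩
  have hmain : Ht [] \ N0 ⊆ X := by
    rintro s ⟨hs0, hsN⟩
    have step : ∀ τ, s ∈ Ht τ → ∃ k : ℕ, s ∈ Ht (τ ++ [k]) := by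
      intro τ hτ
      by_contra hc
      push_neg at hc
      refine hsN (Set.mem_iUnion.mpr ⟨τ, hτ, ?_⟩)
      rw [Set.mem_iUnion]
      rintro ⟨k, hk⟩
      exact hc k hk
    obtain ⟨f, hf⟩ := exists_seq_of_step (C := fun τ => s ∈ Ht τ) hs0 step
    rw [hXdef]
    refine Set.mem_iUnion.mpr ⟨f, Set.mem_iInter.mpr fun n => ?_⟩
    have h1 : s ∈ Q (seg f n) := hHtQ (seg f n) (hf n)
    have h2 := Set.mem_iInter.mp h1 n
    rwa [seg_take f (le_refl n)] at h2
  have hXH : X ⊆ Ht [] := hXXt ▸ (hXtH [])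
  have hsd : Ht [] ∆ X ⊆ N0 := by
    intro t ht
    rw [Set.mem_symmDiff] at ht
    rcases ht with ⟨ht1, ht2⟩ | ⟨ht1, ht2⟩
    · by_contra htN
      exact ht2 (hmain ⟨ht1, htN⟩)
    · exact absurd (hXH ht1) ht2
  obtain ⟨W, N, hWo, hNn, hHeq⟩ := (hHmeas []).msr
  refine UMeasurable.of_msr ⟨W, N ∆ (Ht [] ∆ X), hWo,
    (hNn.union (hN0.mono hsd)).mono Set.symmDiff_subset_union, ?_⟩
  rw [← symmDiff_assoc, ← hHeq, symmDiff_symmDiff_cancel_left]
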